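/- Let (a,b) be a matching pair in L^∞(ℝ) with subordinated pair (c,d). Then the following operator identity holds on L²(ℝ⁺): (W(a) + H(b)) ∘ H(a⁻¹) = W(d) − (W(b) + H(a)) ∘ W(ã⁻¹). -/

import Mathlib

open MeasureTheory Complex Filter Set

noncomputable section

namespace WienerHopf

/-- The space `L²(ℝ;ℂ)`. -/
abbrev L2 : Type := Lp ℂ 2 (volume : Measure ℝ)

open Classical in
/-- Multiplication by a function `a : ℝ → ℂ`, as a bounded operator on `L²(ℝ)`.
(It is defined to be `0` in the degenerate case where `a` is not essentially bounded.) -/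
def mul (a : ℝ → ℂ) : L2 →L[ℂ] L2 :=
  if h : MemLp a ⊤ (volume : Measure ℝ) then
    LinearMap.mkContinuous
      { toFun := fun f => (MemLp.smul (p := ⊤) (r := 2) (Lp.memLp f) h).toLp (a • (f : ℝ → ℂ))
        map_add' := by
          intro f g
          rw [← MemLp.toLp_add]
          apply Lp.ext
          filter_upwards [MemLp.coeFn_toLp (MemLp.smul (p := ⊤) (r := 2) (Lp.memLp (f + g)) h),
            MemLp.coeFn_toLp ((MemLp.smul (p := ⊤) (r := 2) (Lp.memLp f) h).add
              (MemLp.smul (p := ⊤) (r := 2) (Lp.memLp g) h)),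
            Lp.coeFn_add f g] with t h1 h2 h3
          rw [h1, h2]
          simp only [Pi.smul_apply, smul_eq_mul, Pi.mul_apply, Pi.add_apply]
          rw [h3]
          simp [Pi.add_apply, mul_add]
        map_smul' := by
          intro m f
          simp only [RingHom.id_apply]
          rw [← MemLp.toLp_const_smul]
          apply Lp.ext
          filter_upwards [MemLp.coeFn_toLp (MemLp.smul (p := ⊤) (r := 2) (Lp.memLp (m • f)) h),
            MemLp.coeFn_toLp ((MemLp.smul (p := ⊤) (r := 2) (Lp.memLp f) h).const_smul m),
            Lp.coeFn_smul m f] with t h1 h2 h3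
          rw [h1, h2]
          simp only [Pi.smul_apply, smul_eq_mul, Pi.mul_apply]
          rw [h3]
          simp only [Pi.smul_apply, smul_eq_mul]
          ring
        }
      (eLpNorm a ⊤ (volume : Measure ℝ)).toReal
      (by
        intro f
        simp only [LinearMap.coe_mk, AddHom.coe_mk]
        rw [Lp.norm_toLp, Lp.norm_def]
        have hle := eLpNorm_smul_le_mul_eLpNorm (Lp.aestronglyMeasurable f) h.1
          (p := ⊤) (q := 2) (r := 2)
        calc (eLpNorm (a • (f : ℝ → ℂ)) 2 (volume : Measure ℝ)).toReal
            ≤ (eLpNorm a ⊤ (volume : Measure ℝ) * eLpNorm (f : ℝ → ℂ) 2 volume).toReal := by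
              apply ENNReal.toReal_mono _ hle
              exact ENNReal.mul_ne_top h.2.ne (Lp.eLpNorm_lt_top f).ne
          _ = (eLpNorm a ⊤ (volume : Measure ℝ)).toReal *
              (eLpNorm (f : ℝ → ℂ) 2 (volume : Measure ℝ)).toReal := ENNReal.toReal_mul)
  else 0

theorem mul_coeFn {a : ℝ → ℂ} (h : MemLp a ⊤ (volume : Measure ℝ)) (f : L2) :
    (mul a f : ℝ → ℂ) =ᵐ[volume] fun t => a t * f t := by
  rw [mul, dif_pos h]
  show ⇑((MemLp.smul (p := ⊤) (r := 2) (Lp.memLp f) h).toLp (a • (f : ℝ → ℂ))) =ᵐ[volume]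
    fun t => a t * f t
  exact (MemLp.coeFn_toLp _).trans
    (Eventually.of_forall fun t => by simp [Pi.smul_apply])

/-- `(-t)`-reflection is measure preserving. -/
theorem negMP : MeasurePreserving (fun t : ℝ => -t) volume volume :=
  Measure.measurePreserving_neg (volume : Measure ℝ)

/-- The reflection operator `(Jφ)(t) = φ(-t)` on `L²(ℝ)`. -/
def reflect : L2 →L[ℂ] L2 :=
  LinearMap.mkContinuous
    { toFun := ⇑(Lp.compMeasurePreserving (fun t : ℝ => -t) negMP)
      map_add' := fun f g => map_add _ f g
      map_smul' := by
        intro m g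
        simp only [RingHom.id_apply]
        apply Lp.ext
        filter_upwards [Lp.coeFn_compMeasurePreserving (f := fun t : ℝ => -t) (m • g) negMP,
          Lp.coeFn_smul m (Lp.compMeasurePreserving (fun t : ℝ => -t) negMP g),
          Lp.coeFn_compMeasurePreserving (f := fun t : ℝ => -t) g negMP,
          negMP.quasiMeasurePreserving.ae_eq_comp (Lp.coeFn_smul m g)] with t h1 h2 h3 h4
        rw [h1, h2, h4]
        simp only [Function.comp_apply, Pi.smul_apply, smul_eq_mul]
        rw [h3]
        simp only [Function.comp_apply]
      }
    1
    (by
      intro g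
      rw [one_mul]
      exact le_of_eq (Lp.norm_compMeasurePreserving g _))

theorem reflect_coeFn (g : L2) :
    (reflect g : ℝ → ℂ) =ᵐ[volume] fun t => g (-t) :=
  Lp.coeFn_compMeasurePreserving (f := fun t : ℝ => -t) g negMP

/-- The indicator function of `(0,∞)`. -/
def chiPlus : ℝ → ℂ := Set.indicator (Set.Ioi (0 : ℝ)) (fun _ => 1)

theorem chiPlus_memℒp : MemLp chiPlus ⊤ (volume : Measure ℝ) :=
  (memLp_top_const (1 : ℂ)).indicator measurableSet_Ioi

/-- The subspace of `L²(ℝ)` consisting of functions vanishing a.e. on `(-∞,0)`;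
it is identified with `L²(ℝ⁺)`. -/
def posSubspace : Submodule ℂ L2 where
  carrier := {f : L2 | ∀ᵐ t : ℝ ∂volume, t < 0 → (f : ℝ → ℂ) t = 0}
  zero_mem' := by
    filter_upwards [Lp.coeFn_zero ℂ 2 (volume : Measure ℝ)] with t ht _
    simp [ht]
  add_mem' := by
    intro f g hf hg
    filter_upwards [hf, hg, Lp.coeFn_add f g] with t h1 h2 h3 hlt
    rw [h3]
    simp [Pi.add_apply, h1 hlt, h2 hlt]
  smul_mem' := by
    intro m f hf
    filter_upwards [hf, Lp.coeFn_smul m f] with t h1 h2 hlt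
    rw [h2]
    simp [Pi.smul_apply, h1 hlt]

/-- `L²(ℝ⁺)`, realized as the subspace of `L²(ℝ)` of functions vanishing a.e. on `(-∞,0)`. -/
abbrev Lp2Plus : Type := ↥posSubspace

theorem chiPlus_mul_mem (g : L2) : mul chiPlus g ∈ posSubspace := by
  filter_upwards [mul_coeFn chiPlus_memℒp g] with t ht hlt
  rw [ht, chiPlus, Set.indicator_of_notMem (by simpa using hlt.le), zero_mul]

/-- Compression of an operator on `L²(ℝ)` to the subspace `L²(ℝ⁺)`:
`φ ↦ χ₊ ⬝ (T φ)`. -/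
def compress (T : L2 →L[ℂ] L2) : Lp2Plus →L[ℂ] Lp2Plus :=
  LinearMap.mkContinuous
    { toFun := fun φ => ⟨mul chiPlus (T φ.val), chiPlus_mul_mem _⟩
      map_add' := by intro φ ψ; apply Subtype.ext; simp
      map_smul' := by intro m φ; apply Subtype.ext; simp }
    ‖(mul chiPlus).comp T‖
    (by intro φ; exact ((mul chiPlus).comp T).le_opNorm φ.val)

theorem compress_coe (T : L2 →L[ℂ] L2) (φ : Lp2Plus) :
    (compress T φ : L2) = mul chiPlus (T φ.val) := rfl

/-- An abstract realization of the Fourier transform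
`(𝓕φ)(ξ) = ∫ e^{iξx} φ(x) dx` on `L²(ℝ)` (together with its inverse
`(𝓕⁻¹ψ)(x) = (2π)⁻¹ ∫ e^{-iξx} ψ(ξ) dξ`): a continuous linear bijection of `L²(ℝ)`
that is given by the above integral formulas on integrable functions.  By density
of `L¹ ∩ L²` in `L²`, these properties determine the operator uniquely, and by the
Fourier–Plancherel theory such an operator exists. -/
structure FourierL2 where
  equiv : L2 ≃L[ℂ] L2
  forward : ∀ φ : L2, Integrable (φ : ℝ → ℂ) volume →
      (equiv φ : ℝ → ℂ) =ᵐ[volume]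
        fun ξ : ℝ => ∫ x : ℝ, Complex.exp (Complex.I * ξ * x) * φ x
  inverse : ∀ ψ : L2, Integrable (ψ : ℝ → ℂ) volume →
      (equiv.symm ψ : ℝ → ℂ) =ᵐ[volume]
        fun x : ℝ => (2 * Real.pi : ℂ)⁻¹ * ∫ ξ : ℝ, Complex.exp (-(Complex.I * ξ * x)) * ψ ξ

/-- `W⁰(a) = 𝓕⁻¹ M_a 𝓕`, the convolution (Fourier multiplier) operator on `L²(ℝ)`. -/
def W0 (F : FourierL2) (a : ℝ → ℂ) : L2 →L[ℂ] L2 :=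
  (F.equiv.symm : L2 →L[ℂ] L2).comp ((mul a).comp (F.equiv : L2 →L[ℂ] L2))

/-- The Wiener–Hopf operator `W(a) = χ₊ W⁰(a)` on `L²(ℝ⁺)`. -/
def W (F : FourierL2) (a : ℝ → ℂ) : Lp2Plus →L[ℂ] Lp2Plus :=
  compress (W0 F a)

/-- The Hankel operator `H(b) = χ₊ W⁰(b) J` on `L²(ℝ⁺)`. -/
def H (F : FourierL2) (b : ℝ → ℂ) : Lp2Plus →L[ℂ] Lp2Plus :=
  compress ((W0 F b).comp reflect)

/-- `a` is invertible in the Banach algebra `L^∞(ℝ)`: `a ∈ L^∞`, `a ≠ 0` a.e.,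
and the pointwise inverse `a⁻¹` again belongs to `L^∞`. -/
def InvertibleLinf (a : ℝ → ℂ) : Prop :=
  MemLp a ⊤ (volume : Measure ℝ) ∧ (∀ᵐ t : ℝ ∂volume, a t ≠ 0) ∧
    MemLp (fun t => (a t)⁻¹) ⊤ (volume : Measure ℝ)

/-- `(a,b)` is a matching pair: `a, b` are invertible in `L^∞(ℝ)` and
`a(t)a(-t) = b(t)b(-t)` for a.e. `t`. -/
def MatchingPair (a b : ℝ → ℂ) : Prop :=
  InvertibleLinf a ∧ InvertibleLinf b ∧
    ∀ᵐ t : ℝ ∂volume, a t * a (-t) = b t * b (-t)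


/-! ### Auxiliary lemmas -/

/-- The indicator function of `(-∞,0)`. -/
def chiMinus : ℝ → ℂ := Set.indicator (Set.Iio (0 : ℝ)) (fun _ => 1)

theorem chiMinus_memℒp : MemLp chiMinus ⊤ (volume : Measure ℝ) :=
  (memLp_top_const (1 : ℂ)).indicator measurableSet_Iio

theorem memℒp_neg {v : ℝ → ℂ} (hv : MemLp v ⊤ (volume : Measure ℝ)) :
    MemLp (fun t => v (-t)) ⊤ (volume : Measure ℝ) :=
  hv.comp_measurePreserving negMP

theorem mul_congr {u v : ℝ → ℂ} (hu : MemLp u ⊤ (volume : Measure ℝ))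
    (h : u =ᵐ[volume] v) : mul u = mul v := by
  have hv : MemLp v ⊤ (volume : Measure ℝ) := hu.ae_eq h
  refine ContinuousLinearMap.ext fun f => ?_
  apply Lp.ext
  filter_upwards [mul_coeFn hu f, mul_coeFn hv f, h] with t h1 h2 h3
  rw [h1, h2, h3]

theorem memℒp_mul {u v : ℝ → ℂ} (hu : MemLp u ⊤ (volume : Measure ℝ))
    (hv : MemLp v ⊤ (volume : Measure ℝ)) :
    MemLp (fun t => u t * v t) ⊤ (volume : Measure ℝ) :=
  MemLp.smul (p := ⊤) (r := ⊤) hv hu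

theorem mul_mul {u v : ℝ → ℂ} (hu : MemLp u ⊤ (volume : Measure ℝ))
    (hv : MemLp v ⊤ (volume : Measure ℝ)) :
    (mul u).comp (mul v) = mul (fun t => u t * v t) := by
  refine ContinuousLinearMap.ext fun f => ?_
  apply Lp.ext
  filter_upwards [mul_coeFn hu (mul v f), mul_coeFn hv f,
    mul_coeFn (memℒp_mul hu hv) f] with t h1 h2 h3
  simp only [ContinuousLinearMap.comp_apply]
  rw [h1, h2, h3, mul_assoc]

theorem mul_one' : mul (fun _ : ℝ => (1 : ℂ)) = ContinuousLinearMap.id ℂ L2 := by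
  refine ContinuousLinearMap.ext fun f => ?_
  apply Lp.ext
  filter_upwards [mul_coeFn (memLp_top_const (1 : ℂ)) f] with t h1
  rw [h1]; simp

theorem reflect_reflect_apply (f : L2) : reflect (reflect f) = f := by
  apply Lp.ext
  filter_upwards [reflect_coeFn (reflect f),
    negMP.quasiMeasurePreserving.ae_eq (reflect_coeFn f)] with t h1 h2
  rw [h1]
  have h2' : (reflect f : ℝ → ℂ) (-t) = f (-(-t)) := h2
  rw [h2', neg_neg]

theorem mul_reflect {v : ℝ → ℂ} (hv : MemLp v ⊤ (volume : Measure ℝ)) :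
    (mul v).comp reflect = reflect.comp (mul (fun t => v (-t))) := by
  have hv' := memℒp_neg hv
  refine ContinuousLinearMap.ext fun f => ?_
  apply Lp.ext
  filter_upwards [mul_coeFn hv (reflect f), reflect_coeFn f,
    reflect_coeFn (mul (fun t => v (-t)) f),
    negMP.quasiMeasurePreserving.ae_eq (mul_coeFn hv' f)] with t h1 h2 h3 h4
  simp only [ContinuousLinearMap.comp_apply]
  rw [h1, h2, h3]
  have h4' : (mul (fun t => v (-t)) f : ℝ → ℂ) (-t) = v (-(-t)) * f (-t) := h4
  rw [h4', neg_neg]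

theorem fourier_reflect_apply (F : FourierL2) (g : L2) :
    F.equiv (reflect g) = reflect (F.equiv g) := by
  have key : ∀ g : L2, Integrable (g : ℝ → ℂ) volume →
      F.equiv (reflect g) = reflect (F.equiv g) := by
    intro g hg
    have hrg : Integrable (reflect g : ℝ → ℂ) volume :=
      ((negMP.integrable_comp hg.aestronglyMeasurable).mpr hg).congr (reflect_coeFn g).symm
    apply Lp.ext
    filter_upwards [F.forward (reflect g) hrg,
      negMP.quasiMeasurePreserving.ae_eq (F.forward g hg),
      reflect_coeFn (F.equiv g)] with ξ e1 e2 e3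
    rw [e1, e3]
    have e2' : (F.equiv g : ℝ → ℂ) (-ξ) =
        ∫ x : ℝ, Complex.exp (Complex.I * (↑(-ξ) : ℂ) * x) * g x := e2
    rw [e2']
    have step1 : (∫ x : ℝ, Complex.exp (Complex.I * ξ * x) * (reflect g : ℝ → ℂ) x)
        = ∫ x : ℝ, Complex.exp (Complex.I * (↑(-ξ) : ℂ) * ↑(-x)) * g (-x) := by
      refine integral_congr_ae ?_
      filter_upwards [reflect_coeFn g] with x hx
      rw [hx]
      push_cast
      ring_nf
    rw [step1]
    exact integral_neg_eq_self
      (fun x : ℝ => Complex.exp (Complex.I * (↑(-ξ) : ℂ) * ↑x) * g x) volume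
  -- density argument
  have h : (F.equiv : L2 →L[ℂ] L2).comp reflect =
      reflect.comp (F.equiv : L2 →L[ℂ] L2) := by
    have hdense : DenseRange ((↑) : Lp.simpleFunc ℂ 2 (volume : Measure ℝ) → L2) :=
      Lp.simpleFunc.denseRange (by norm_num)
    have heq : ⇑((F.equiv : L2 →L[ℂ] L2).comp reflect) ∘
          ((↑) : Lp.simpleFunc ℂ 2 (volume : Measure ℝ) → L2)
        = ⇑(reflect.comp (F.equiv : L2 →L[ℂ] L2)) ∘
          ((↑) : Lp.simpleFunc ℂ 2 (volume : Measure ℝ) → L2) := by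
      funext s
      have hint : Integrable ((s : L2) : ℝ → ℂ) volume := by
        have h1 : MemLp (Lp.simpleFunc.toSimpleFunc s) 2 (volume : Measure ℝ) :=
          (Lp.memLp (s : L2)).ae_eq (Lp.simpleFunc.toSimpleFunc_eq_toFun s).symm
        have h2 : Integrable (Lp.simpleFunc.toSimpleFunc s) volume :=
          (SimpleFunc.memLp_iff_integrable (by norm_num) (by norm_num)).mp h1
        exact h2.congr (Lp.simpleFunc.toSimpleFunc_eq_toFun s)
      exact key _ hint
    have := hdense.equalizer
      ((F.equiv : L2 →L[ℂ] L2).comp reflect).continuous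
      (reflect.comp (F.equiv : L2 →L[ℂ] L2)).continuous heq
    exact ContinuousLinearMap.ext fun g => congrFun this g
  exact ContinuousLinearMap.ext_iff.mp h g

theorem fourier_symm_reflect_apply (F : FourierL2) (g : L2) :
    F.equiv.symm (reflect g) = reflect (F.equiv.symm g) := by
  apply F.equiv.injective
  rw [F.equiv.apply_symm_apply, fourier_reflect_apply F, F.equiv.apply_symm_apply]

theorem W0_mul (F : FourierL2) {u v : ℝ → ℂ} (hu : MemLp u ⊤ (volume : Measure ℝ))
    (hv : MemLp v ⊤ (volume : Measure ℝ)) :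
    W0 F (fun t => u t * v t) = (W0 F u).comp (W0 F v) := by
  rw [W0, W0, W0, ← mul_mul hu hv]
  refine ContinuousLinearMap.ext fun g => ?_
  simp [ContinuousLinearMap.comp_apply]

theorem W0_one (F : FourierL2) :
    W0 F (fun _ : ℝ => (1 : ℂ)) = ContinuousLinearMap.id ℂ L2 := by
  rw [W0, mul_one']
  refine ContinuousLinearMap.ext fun g => ?_
  simp

theorem W0_reflect_apply (F : FourierL2) {v : ℝ → ℂ}
    (hv : MemLp v ⊤ (volume : Measure ℝ)) (g : L2) :
    reflect (W0 F (fun t => v (-t)) g) = W0 F v (reflect g) := by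
  have hmr := ContinuousLinearMap.ext_iff.mp (mul_reflect hv)
  simp only [W0, ContinuousLinearMap.comp_apply, ContinuousLinearEquiv.coe_coe]
  rw [fourier_reflect_apply F g]
  have : mul v (reflect (F.equiv g)) = reflect (mul (fun t => v (-t)) (F.equiv g)) := by
    have := hmr (F.equiv g)
    simpa using this
  rw [this, ← fourier_symm_reflect_apply F]

theorem chiMinus_neg : (fun t : ℝ => chiMinus (-t)) = chiPlus := by
  funext t
  simp only [chiMinus, chiPlus, Set.indicator_apply, Set.mem_Iio, Set.mem_Ioi, neg_lt_zero]

theorem chiPlus_neg : (fun t : ℝ => chiPlus (-t)) = chiMinus := by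
  funext t
  simp only [chiMinus, chiPlus, Set.indicator_apply, Set.mem_Iio, Set.mem_Ioi, neg_pos]

/-- `J P = Q J`. -/
theorem reflect_mul_chiPlus (g : L2) :
    reflect (mul chiPlus g) = mul chiMinus (reflect g) := by
  have h := ContinuousLinearMap.ext_iff.mp (mul_reflect chiMinus_memℒp) g
  simp only [ContinuousLinearMap.comp_apply, chiMinus_neg] at h
  exact h.symm

/-- `P J = J Q`. -/
theorem mul_chiPlus_reflect (g : L2) :
    mul chiPlus (reflect g) = reflect (mul chiMinus g) := by
  have h := ContinuousLinearMap.ext_iff.mp (mul_reflect chiPlus_memℒp) g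
  simp only [ContinuousLinearMap.comp_apply, chiPlus_neg] at h
  exact h

theorem ae_ne_zero : ∀ᵐ t : ℝ ∂volume, t ≠ 0 := by
  have : (volume : Measure ℝ) {(0 : ℝ)} = 0 := measure_singleton 0
  rw [ae_iff]
  simpa [Set.setOf_eq_eq_singleton] using this

theorem chi_split (g : L2) : mul chiPlus g + mul chiMinus g = g := by
  apply Lp.ext
  filter_upwards [mul_coeFn chiPlus_memℒp g, mul_coeFn chiMinus_memℒp g,
    Lp.coeFn_add (mul chiPlus g) (mul chiMinus g), ae_ne_zero] with t h1 h2 h3 h4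
  rw [h3]
  simp only [Pi.add_apply]
  rw [h1, h2]
  rcases h4.lt_or_gt with ht | ht
  · rw [chiPlus, Set.indicator_of_notMem (by simpa using ht.le),
      chiMinus, Set.indicator_of_mem (by simpa using ht)]
    simp
  · rw [chiPlus, Set.indicator_of_mem (by simpa using ht),
      chiMinus, Set.indicator_of_notMem (by simpa using ht.le)]
    simp

theorem mul_chiMinus_of_pos (φ : Lp2Plus) : mul chiMinus (φ : L2) = 0 := by
  apply Lp.ext
  have hφ : ∀ᵐ t : ℝ ∂volume, t < 0 → ((φ : L2) : ℝ → ℂ) t = 0 := φ.2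
  filter_upwards [mul_coeFn chiMinus_memℒp (φ : L2), hφ,
    Lp.coeFn_zero ℂ 2 (volume : Measure ℝ)] with t h1 h2 h3
  rw [h1, h3]
  by_cases ht : t < 0
  · rw [h2 ht, mul_zero]; rfl
  · rw [chiMinus, Set.indicator_of_notMem (by simpa using ht), zero_mul]; rfl

/-- The fundamental identity `W(uv) = W(u)W(v) + H(u)H(ṽ)`. -/
theorem W_mul_eq (F : FourierL2) {u v w : ℝ → ℂ}
    (hu : MemLp u ⊤ (volume : Measure ℝ)) (hv : MemLp v ⊤ (volume : Measure ℝ))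
    (hw : ∀ t, w t = v (-t)) :
    (W F u).comp (W F v) + (H F u).comp (H F w) = W F (fun t => u t * v t) := by
  obtain rfl : w = fun t => v (-t) := funext hw
  refine ContinuousLinearMap.ext fun φ => Subtype.ext ?_
  simp only [ContinuousLinearMap.add_apply, ContinuousLinearMap.comp_apply,
    Submodule.coe_add, W, H, compress_coe]
  have e1 : reflect (mul chiPlus (W0 F (fun t => v (-t)) (reflect (φ : L2))))
      = mul chiMinus (W0 F v (φ : L2)) := by
    rw [reflect_mul_chiPlus, W0_reflect_apply F hv, reflect_reflect_apply]
  rw [e1, ← map_add, ← map_add, chi_split, W0_mul F hu hv]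
  rfl

/-- The fundamental identity `H(uv) = W(u)H(v) + H(u)W(ṽ)`. -/
theorem H_mul_eq (F : FourierL2) {u v w : ℝ → ℂ}
    (hu : MemLp u ⊤ (volume : Measure ℝ)) (hv : MemLp v ⊤ (volume : Measure ℝ))
    (hw : ∀ t, w t = v (-t)) :
    (W F u).comp (H F v) + (H F u).comp (W F w) = H F (fun t => u t * v t) := by
  obtain rfl : w = fun t => v (-t) := funext hw
  refine ContinuousLinearMap.ext fun φ => Subtype.ext ?_
  simp only [ContinuousLinearMap.add_apply, ContinuousLinearMap.comp_apply,
    Submodule.coe_add, W, H, compress_coe]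
  have e1 : reflect (mul chiPlus (W0 F (fun t => v (-t)) (φ : L2)))
      = mul chiMinus (W0 F v (reflect (φ : L2))) := by
    rw [reflect_mul_chiPlus, W0_reflect_apply F hv]
  rw [e1, ← map_add, ← map_add, chi_split, W0_mul F hu hv]
  rfl

theorem H_one (F : FourierL2) : H F (fun _ : ℝ => (1 : ℂ)) = 0 := by
  refine ContinuousLinearMap.ext fun φ => Subtype.ext ?_
  simp only [H, compress_coe, ContinuousLinearMap.comp_apply, W0_one,
    ContinuousLinearMap.id_apply, ContinuousLinearMap.zero_apply]
  rw [mul_chiPlus_reflect, mul_chiMinus_of_pos, map_zero]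
  rfl

theorem W_congr (F : FourierL2) {u v : ℝ → ℂ} (hu : MemLp u ⊤ (volume : Measure ℝ))
    (h : u =ᵐ[volume] v) : W F u = W F v := by
  unfold W W0
  rw [mul_congr hu h]

theorem H_congr (F : FourierL2) {u v : ℝ → ℂ} (hu : MemLp u ⊤ (volume : Measure ℝ))
    (h : u =ᵐ[volume] v) : H F u = H F v := by
  unfold H W0
  rw [mul_congr hu h]

/-- For a matching pair `(a,b)` with subordinated pair `(c,d)`:
`(W(a) + H(b)) H(a⁻¹) = W(d) - (W(b) + H(a)) W(ã⁻¹)`. -/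
theorem identity_Hankel_inverse
    (F : FourierL2) (a b c d : ℝ → ℂ) (hab : MatchingPair a b)
    (hc : c = fun t => a t * (b t)⁻¹) (hd : d = fun t => a t * (b (-t))⁻¹) :
    (W F a + H F b).comp (H F (fun t => (a t)⁻¹)) =
      W F d - (W F b + H F a).comp (W F (fun t => (a (-t))⁻¹)) := by
  obtain ⟨⟨haM, haNe, haInv⟩, ⟨hbM, hbNe, hbInv⟩, hmatch⟩ := hab
  have haInvNeg : MemLp (fun t => (a (-t))⁻¹) ⊤ (volume : Measure ℝ) := memℒp_neg haInv
  have haNeNeg : ∀ᵐ t : ℝ ∂volume, a (-t) ≠ 0 := negMP.quasiMeasurePreserving.ae haNe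
  have hbNeNeg : ∀ᵐ t : ℝ ∂volume, b (-t) ≠ 0 := negMP.quasiMeasurePreserving.ae hbNe
  have eq1 : (W F a).comp (H F (fun t => (a t)⁻¹)) +
      (H F a).comp (W F (fun t => (a (-t))⁻¹)) = 0 := by
    have h := H_mul_eq F (w := fun t => (a (-t))⁻¹) haM haInv (fun t => rfl)
    rw [h, H_congr F (memℒp_mul haM haInv)
      (show (fun t => a t * (a t)⁻¹) =ᵐ[volume] fun _ => (1 : ℂ) by
        filter_upwards [haNe] with t ht
        exact mul_inv_cancel₀ ht), H_one]
  have eq2 : (W F b).comp (W F (fun t => (a (-t))⁻¹)) +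
      (H F b).comp (H F (fun t => (a t)⁻¹)) = W F d := by
    have h := W_mul_eq F (w := fun t => (a t)⁻¹) hbM haInvNeg (fun t => by rw [neg_neg])
    rw [h, W_congr F (memℒp_mul hbM haInvNeg)
      (show (fun t => b t * (a (-t))⁻¹) =ᵐ[volume] d by
        rw [hd]
        filter_upwards [hmatch, haNeNeg, hbNeNeg] with t hm han hbn
        field_simp
        linear_combination -hm)]
  rw [ContinuousLinearMap.add_comp, ContinuousLinearMap.add_comp, ← eq2,
    show (W F a).comp (H F (fun t => (a t)⁻¹)) =
      -((H F a).comp (W F (fun t => (a (-t))⁻¹))) from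
        eq_neg_of_add_eq_zero_left eq1]
  abel

end WienerHopf
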